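/- Let γ⁰, γ¹, γ², γ³ be the Dirac matrices in the standard Dirac representation and γ₅ := iγ⁰γ¹γ²γ³, and set σ^{μν} := ½(γ^μγ^ν − γ^νγ^μ). Then for every Ψ ∈ ℂ⁴ and for every Q belonging to the set {𝟙, γ^μ (μ = 0,…,3), γ₅, γ^μγ₅ (μ = 0,…,3), σ^{μν} (μ,ν = 0,…,3)}, the Pauli–Kofink identity holds: ( Ψ̄ Q γ_λ Ψ ) γ^λ Ψ = ( Ψ̄ Q Ψ ) Ψ − ( Ψ̄ Q γ₅ Ψ ) γ₅ Ψ, where the repeated index λ is summed with γ^λ = η^{λμ} γ_μ. -/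

import Mathlib

open scoped BigOperators
open Matrix

noncomputable section

/-- The Dirac matrices γ⁰, γ¹, γ², γ³ in the standard Dirac representation. -/
def γm : Fin 4 → Matrix (Fin 4) (Fin 4) ℂ :=
  ![!![1, 0, 0, 0; 0, 1, 0, 0; 0, 0, -1, 0; 0, 0, 0, -1],
    !![0, 0, 0, 1; 0, 0, 1, 0; 0, -1, 0, 0; -1, 0, 0, 0],
    !![0, 0, 0, -Complex.I; 0, 0, Complex.I, 0; 0, Complex.I, 0, 0; -Complex.I, 0, 0, 0],
    !![0, 0, 1, 0; 0, 0, 0, -1; -1, 0, 0, 0; 0, 1, 0, 0]]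

/-- γ₅ := i γ⁰γ¹γ²γ³. -/
def γ5 : Matrix (Fin 4) (Fin 4) ℂ := Complex.I • (γm 0 * γm 1 * γm 2 * γm 3)

/-- The Minkowski metric diag(1,-1,-1,-1) with complex entries. -/
def ηc (μ ν : Fin 4) : ℂ := if μ = ν then (if μ = 0 then 1 else -1) else 0

/-- The Dirac bilinear Ψ̄ Q Ψ, with Ψ̄ := Ψ†γ⁰. -/
def bil (Q : Matrix (Fin 4) (Fin 4) ℂ) (Ψ : Fin 4 → ℂ) : ℂ :=
  dotProduct (Matrix.vecMul (star Ψ) (γm 0)) (Q.mulVec Ψ)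

lemma γ5_eq : γ5 = !![0,0,1,0; 0,0,0,1; 1,0,0,0; 0,1,0,0] := by
  have m01 : γm 0 * γm 1 = !![0,0,0,1; 0,0,1,0; 0,1,0,0; 1,0,0,0] := by
    ext i j
    fin_cases i <;> fin_cases j <;>
      simp [γm, Matrix.mul_apply, Fin.sum_univ_four, Matrix.vecHead, Matrix.vecTail]
  have m012 : γm 0 * γm 1 * γm 2 =
      !![-Complex.I,0,0,0; 0,Complex.I,0,0; 0,0,Complex.I,0; 0,0,0,-Complex.I] := by
    rw [m01]; ext i j
    fin_cases i <;> fin_cases j <;>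
      simp [γm, Matrix.mul_apply, Fin.sum_univ_four, Matrix.vecHead, Matrix.vecTail]
  rw [γ5, m012]; ext i j
  fin_cases i <;> fin_cases j <;>
    simp [γm, Matrix.mul_apply, Fin.sum_univ_four, Complex.I_mul_I,
      Matrix.vecHead, Matrix.vecTail]

lemma hg0 (Ψ : Fin 4 → ℂ) : (γm 0).mulVec Ψ = ![Ψ 0, Ψ 1, -(Ψ 2), -(Ψ 3)] := by
  funext i; fin_cases i <;> simp [γm, Matrix.mulVec, dotProduct, Fin.sum_univ_four]
lemma hg1 (Ψ : Fin 4 → ℂ) : (γm 1).mulVec Ψ = ![Ψ 3, Ψ 2, -(Ψ 1), -(Ψ 0)] := by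
  funext i; fin_cases i <;> simp [γm, Matrix.mulVec, dotProduct, Fin.sum_univ_four]
lemma hg2 (Ψ : Fin 4 → ℂ) :
    (γm 2).mulVec Ψ = ![-(Complex.I * Ψ 3), Complex.I * Ψ 2, Complex.I * Ψ 1, -(Complex.I * Ψ 0)] := by
  funext i; fin_cases i <;> simp [γm, Matrix.mulVec, dotProduct, Fin.sum_univ_four]
lemma hg3 (Ψ : Fin 4 → ℂ) : (γm 3).mulVec Ψ = ![Ψ 2, -(Ψ 3), -(Ψ 0), Ψ 1] := by
  funext i; fin_cases i <;> simp [γm, Matrix.mulVec, dotProduct, Fin.sum_univ_four]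
lemma hg5 (Ψ : Fin 4 → ℂ) : γ5.mulVec Ψ = ![Ψ 2, Ψ 3, Ψ 0, Ψ 1] := by
  rw [γ5_eq]; funext i
  fin_cases i <;> simp [Matrix.mulVec, dotProduct, Fin.sum_univ_four]

lemma hsum0 : (∑ μ, ηc 0 μ • γm μ) = γm 0 := by simp [Fin.sum_univ_four, ηc]
lemma hsum1 : (∑ μ, ηc 1 μ • γm μ) = -γm 1 := by simp [Fin.sum_univ_four, ηc]
lemma hsum2 : (∑ μ, ηc 2 μ • γm μ) = -γm 2 := by simp [Fin.sum_univ_four, ηc]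
lemma hsum3 : (∑ μ, ηc 3 μ • γm μ) = -γm 3 := by simp [Fin.sum_univ_four, ηc]
lemma fin2 (h : 2 < 4) : (⟨2, h⟩ : Fin 4) = 2 := rfl
lemma fin3 (h : 3 < 4) : (⟨3, h⟩ : Fin 4) = 3 := rfl

set_option maxHeartbeats 2000000 in
lemma core' (Ψ : Fin 4 → ℂ) (b i : Fin 4) :
    ((γm 0).mulVec Ψ b) * ((γm 0).mulVec Ψ i) - ((γm 1).mulVec Ψ b) * ((γm 1).mulVec Ψ i)
      - ((γm 2).mulVec Ψ b) * ((γm 2).mulVec Ψ i) - ((γm 3).mulVec Ψ b) * ((γm 3).mulVec Ψ i)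
      = Ψ b * Ψ i - (γ5.mulVec Ψ b) * (γ5.mulVec Ψ i) := by
  simp only [hg0, hg1, hg2, hg3, hg5]
  fin_cases b <;> fin_cases i <;>
  · norm_num [Matrix.cons_val_zero, Matrix.cons_val_one, Matrix.head_cons,
      Matrix.cons_val_two, Matrix.tail_cons, Matrix.cons_val_three, Fin.mk_zero, Fin.mk_one,
      fin2, fin3]
    first
    | ring1
    | (ring_nf; simp only [Complex.I_sq]; ring1)

lemma bil_neg (M : Matrix (Fin 4) (Fin 4) ℂ) (Ψ : Fin 4 → ℂ) : bil (-M) Ψ = -bil M Ψ := by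
  simp [bil, Matrix.neg_mulVec]

lemma hbil (Q M : Matrix (Fin 4) (Fin 4) ℂ) (Ψ : Fin 4 → ℂ) :
    bil (Q * M) Ψ = ∑ a, ∑ b, Matrix.vecMul (star Ψ) (γm 0) a * (Q a b * M.mulVec Ψ b) := by
  simp only [bil, ← Matrix.mulVec_mulVec, dotProduct]
  refine Finset.sum_congr rfl fun a _ => ?_
  rw [show Q.mulVec (M.mulVec Ψ) a = ∑ b, Q a b * M.mulVec Ψ b from rfl, Finset.mul_sum]

lemma hbilQ (Q : Matrix (Fin 4) (Fin 4) ℂ) (Ψ : Fin 4 → ℂ) :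
    bil Q Ψ = ∑ a, ∑ b, Matrix.vecMul (star Ψ) (γm 0) a * (Q a b * Ψ b) := by
  have := hbil Q 1 Ψ
  simpa using this

set_option maxHeartbeats 2000000 in
/-- the Pauli–Kofink identity
(Ψ̄ Q γ_λ Ψ) γ^λ Ψ = (Ψ̄QΨ)Ψ − (Ψ̄Qγ₅Ψ)γ₅Ψ, for Q in
{𝟙, γ^μ, γ₅, γ^μγ₅, σ^{μν}}, with γ_λ = η_{λμ}γ^μ. -/
theorem pauli_kofink_identity
    (Ψ : Fin 4 → ℂ) (Q : Matrix (Fin 4) (Fin 4) ℂ)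
    (hQ : Q = 1 ∨ (∃ μ, Q = γm μ) ∨ Q = γ5 ∨ (∃ μ, Q = γm μ * γ5) ∨
      (∃ μ ν, Q = (1 / 2 : ℂ) • (γm μ * γm ν - γm ν * γm μ))) :
    (∑ l, bil (Q * (∑ μ, ηc l μ • γm μ)) Ψ • (γm l).mulVec Ψ)
      = bil Q Ψ • Ψ - bil (Q * γ5) Ψ • γ5.mulVec Ψ := by
  clear hQ
  funext i
  simp only [Finset.sum_apply, Pi.smul_apply, Pi.sub_apply, smul_eq_mul]
  rw [Fin.sum_univ_four]
  rw [hsum0, hsum1, hsum2, hsum3]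
  simp only [mul_neg, bil_neg, neg_mul]
  rw [hbil Q (γm 0) Ψ, hbil Q (γm 1) Ψ, hbil Q (γm 2) Ψ, hbil Q (γm 3) Ψ,
    hbil Q γ5 Ψ, hbilQ Q Ψ]
  simp only [Fin.sum_univ_four]
  linear_combination
    Matrix.vecMul (star Ψ) (γm 0) 0 * Q 0 0 * core' Ψ 0 i +
    Matrix.vecMul (star Ψ) (γm 0) 0 * Q 0 1 * core' Ψ 1 i +
    Matrix.vecMul (star Ψ) (γm 0) 0 * Q 0 2 * core' Ψ 2 i +
    Matrix.vecMul (star Ψ) (γm 0) 0 * Q 0 3 * core' Ψ 3 i +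
    Matrix.vecMul (star Ψ) (γm 0) 1 * Q 1 0 * core' Ψ 0 i +
    Matrix.vecMul (star Ψ) (γm 0) 1 * Q 1 1 * core' Ψ 1 i +
    Matrix.vecMul (star Ψ) (γm 0) 1 * Q 1 2 * core' Ψ 2 i +
    Matrix.vecMul (star Ψ) (γm 0) 1 * Q 1 3 * core' Ψ 3 i +
    Matrix.vecMul (star Ψ) (γm 0) 2 * Q 2 0 * core' Ψ 0 i +
    Matrix.vecMul (star Ψ) (γm 0) 2 * Q 2 1 * core' Ψ 1 i +
    Matrix.vecMul (star Ψ) (γm 0) 2 * Q 2 2 * core' Ψ 2 i +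
    Matrix.vecMul (star Ψ) (γm 0) 2 * Q 2 3 * core' Ψ 3 i +
    Matrix.vecMul (star Ψ) (γm 0) 3 * Q 3 0 * core' Ψ 0 i +
    Matrix.vecMul (star Ψ) (γm 0) 3 * Q 3 1 * core' Ψ 1 i +
    Matrix.vecMul (star Ψ) (γm 0) 3 * Q 3 2 * core' Ψ 2 i +
    Matrix.vecMul (star Ψ) (γm 0) 3 * Q 3 3 * core' Ψ 3 i
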